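/- Let G be a non-archimedean Polish group and let f ∈ G. Then the following are equivalent: (1) the conjugacy class {g f g⁻¹ : g ∈ G} is non-meager in G; (2) for each open subgroup V of G, the set {g f g⁻¹ : g ∈ V} is somewhere dense in G; (3) for each open subgroup V of G, f belongs to the interior of the closure of {g f g⁻¹ : g ∈ V}. -/

import Mathlib

open Set

section Aux

variable {G : Type*} [Group G] [TopologicalSpace G] [IsTopologicalGroup G]

/-- Conjugation by `g` as a homeomorphism. -/
private def conjH (g : G) : G ≃ₜ G :=
  (Homeomorph.mulLeft g).trans (Homeomorph.mulRight g⁻¹)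

private lemma conjH_apply (g x : G) : conjH g x = g * x * g⁻¹ := rfl

private lemma conjH_image_subset (f : G) (V : Subgroup G) {v : G} (hv : v ∈ V) :
    conjH v '' {h : G | ∃ g ∈ V, g * f * g⁻¹ = h} ⊆ {h : G | ∃ g ∈ V, g * f * g⁻¹ = h} := by
  rintro _ ⟨_, ⟨g, hg, rfl⟩, rfl⟩
  exact ⟨v * g, V.mul_mem hv hg, by simp [conjH_apply]; group⟩

private lemma conjH_image_eq (f : G) (V : Subgroup G) {v : G} (hv : v ∈ V) :
    conjH v '' {h : G | ∃ g ∈ V, g * f * g⁻¹ = h} = {h : G | ∃ g ∈ V, g * f * g⁻¹ = h} := by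
  refine subset_antisymm (conjH_image_subset f V hv) ?_
  intro x hx
  have := conjH_image_subset f V (V.inv_mem hv) ⟨x, hx, rfl⟩
  refine ⟨conjH v⁻¹ x, this, ?_⟩
  simp [conjH_apply]; group

end Aux

/-- Kechris–Rosendal criterion: in a non-archimedean Polish group `G`, the
conjugacy class of `f` is non-meager iff for each open subgroup `V` the
`V`-conjugates of `f` are somewhere dense, iff for each open subgroup `V`, `f`
lies in the interior of the closure of its `V`-conjugates. -/
theorem nonmeager_conjugacy_class_tfae (G : Type*) [Group G] [TopologicalSpace G]
    [IsTopologicalGroup G] [PolishSpace G] [NonarchimedeanGroup G] (f : G) :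
    List.TFAE
      [ ¬ IsMeagre {h : G | ∃ g : G, g * f * g⁻¹ = h},
        ∀ V : Subgroup G, IsOpen (V : Set G) →
          (interior (closure {h : G | ∃ g ∈ V, g * f * g⁻¹ = h})).Nonempty,
        ∀ V : Subgroup G, IsOpen (V : Set G) →
          f ∈ interior (closure {h : G | ∃ g ∈ V, g * f * g⁻¹ = h}) ] := by
  tfae_have 3 → 2 := fun h V hV => ⟨f, h V hV⟩
  tfae_have 2 → 3 := by
    intro h2 V hV
    set CV := {h : G | ∃ g ∈ V, g * f * g⁻¹ = h} with hCV
    obtain ⟨x, hx⟩ := h2 V hV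
    have hxcl : x ∈ closure CV := interior_subset hx
    obtain ⟨y, hyU, hyC⟩ := mem_closure_iff.mp hxcl _ isOpen_interior hx
    obtain ⟨v, hv, rfl⟩ := hyC
    have himg : conjH v⁻¹ '' interior (closure CV) = interior (closure CV) := by
      rw [Homeomorph.image_interior, Homeomorph.image_closure,
        conjH_image_eq f V (V.inv_mem hv)]
    rw [← himg]
    exact ⟨v * f * v⁻¹, hyU, by simp [conjH_apply]; group⟩
  tfae_have 1 → 2 := by
    intro h1 V hV
    by_contra hne
    apply h1
    rw [not_nonempty_iff_eq_empty] at hne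
    set CV := {h : G | ∃ g ∈ V, g * f * g⁻¹ = h} with hCV
    obtain ⟨D, hDc, hDd⟩ := TopologicalSpace.exists_countable_dense G
    rw [isMeagre_iff_countable_union_isNowhereDense]
    refine ⟨(fun d => conjH d '' closure CV) '' D, ?_, hDc.image _, ?_⟩
    · rintro _ ⟨d, -, rfl⟩
      have hcl : IsClosed (conjH d '' closure CV) :=
        (Homeomorph.isClosedMap _) _ isClosed_closure
      unfold IsNowhereDense
      rw [hcl.closure_eq, ← Homeomorph.image_interior, hne, image_empty]
    · rintro _ ⟨g, rfl⟩
      have hopen : IsOpen ((Homeomorph.mulLeft g) '' (V : Set G)) :=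
        (Homeomorph.mulLeft g).isOpenMap _ hV
      obtain ⟨d, hd1, hd2⟩ := (dense_iff_inter_open.mp hDd _ hopen
        ⟨g, 1, V.one_mem, by simp⟩)
      obtain ⟨v, hvV, hdv⟩ := hd1
      refine mem_sUnion.mpr ⟨conjH d '' closure CV, ⟨d, hd2, rfl⟩, ?_⟩
      refine ⟨v⁻¹ * f * v⁻¹⁻¹, subset_closure ⟨v⁻¹, V.inv_mem hvV, rfl⟩, ?_⟩
      have : d = g * v := by simpa using hdv.symm
      subst this
      simp [conjH_apply]; group
  tfae_have 2 → 1 := by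
    intro h2 h1
    letI := TopologicalSpace.upgradeIsCompletelyMetrizable G
    obtain ⟨S, hS_nd, hS_ct, hS_cov⟩ := isMeagre_iff_countable_union_isNowhereDense.mp h1
    have : Countable ↥S := hS_ct.to_subtype
    have hcov : ⋃ t : ↥S, {g : G | g * f * g⁻¹ ∈ closure (t : Set G)} = univ := by
      ext g
      simp only [mem_iUnion, mem_univ, iff_true]
      obtain ⟨t, htS, hgt⟩ := hS_cov ⟨g, rfl⟩
      exact ⟨⟨t, htS⟩, subset_closure hgt⟩
    obtain ⟨t, x, hx⟩ := nonempty_interior_of_iUnion_of_closed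
      (f := fun t : ↥S => {g : G | g * f * g⁻¹ ∈ closure (t : Set G)})
      (fun t => isClosed_closure.preimage (by fun_prop)) hcov
    have hnbhd : {y : G | x * y ∈ interior {g : G | g * f * g⁻¹ ∈ closure (t : Set G)}}
        ∈ nhds (1 : G) := by
      have hcont : Continuous (fun y : G => x * y) := by fun_prop
      have ho : IsOpen {y : G | x * y ∈ interior {g : G | g * f * g⁻¹ ∈ closure (t : Set G)}} :=
        hcont.isOpen_preimage _ isOpen_interior
      exact ho.mem_nhds (by simpa using hx)
    obtain ⟨V, hV⟩ := NonarchimedeanGroup.is_nonarchimedean _ hnbhd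
    set CV := {h : G | ∃ g ∈ V.toSubgroup, g * f * g⁻¹ = h} with hCV
    have hsub : CV ⊆ conjH x⁻¹ '' closure (t : Set G) := by
      rintro _ ⟨v, hvV, rfl⟩
      have hxv : x * v ∈ {g : G | g * f * g⁻¹ ∈ closure (t : Set G)} :=
        interior_subset (hV hvV)
      exact ⟨(x * v) * f * (x * v)⁻¹, hxv, by simp [conjH_apply]; group⟩
    have hclosed : IsClosed (conjH x⁻¹ '' closure (t : Set G)) :=
      (Homeomorph.isClosedMap _) _ isClosed_closure
    have hint : interior (conjH x⁻¹ '' closure (t : Set G)) = ∅ := by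
      rw [← Homeomorph.image_interior, hS_nd _ t.2, image_empty]
    obtain ⟨z, hz⟩ := h2 V.toSubgroup V.isOpen
    have hsubcl : closure CV ⊆ conjH x⁻¹ '' closure (t : Set G) :=
      closure_minimal hsub hclosed
    have : z ∈ interior (conjH x⁻¹ '' closure (t : Set G)) := interior_mono hsubcl hz
    rw [hint] at this
    exact this
  tfae_finish
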